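/- Let p be an odd prime and let v ∈ 𝔽_2^p be a non-symmetric vector with v_0 = 0, coordinates indexed by ℤ/pℤ. Suppose there exist simultaneously i with v_i = v_{−i} = 1 and j ≠ 0 with v_j = v_{−j} = 0. Then there exists a subset S ⊆ ℤ/pℤ of odd cardinality such that either for every i ∈ S the number of j ∈ S with v_{j−i} = 1 is odd, or for every i ∈ S the number of j ∈ S with v_{i−j} = 1 is odd. In particular, v and ê do not work together. -/
import Mathlib

open Finset Pointwise

private lemma zmod2_cases : ∀ a : ZMod 2, a = 0 ∨ a = 1 := by decide

/-- The cyclic shift operator on `𝔽₂ⁿ` (indexed by `ZMod n`): `(cshift x) i = x (i - 1)`. -/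
def cshift {n : ℕ} (x : ZMod n → ZMod 2) : ZMod n → ZMod 2 := fun i => x (i - 1)

/-- The standard dot product over `𝔽₂`. -/
def dot {n : ℕ} [NeZero n] (v x : ZMod n → ZMod 2) : ZMod 2 := ∑ i, v i * x i

/-- A vector `v ∈ 𝔽₂ⁿ` works if for every `x` some cyclic shift of `x` is orthogonal to `v`. -/
def Works {n : ℕ} [NeZero n] (v : ZMod n → ZMod 2) : Prop :=
  ∀ x : ZMod n → ZMod 2, ∃ k : ℕ, dot v (cshift^[k] x) = 0

/-- Two vectors `v, w ∈ 𝔽₂ⁿ` work together if for every `x` there is a single cyclic shift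
of `x` orthogonal to both. -/
def WorkTogether2 {n : ℕ} [NeZero n] (v w : ZMod n → ZMod 2) : Prop :=
  ∀ x : ZMod n → ZMod 2, ∃ k : ℕ,
    dot v (cshift^[k] x) = 0 ∧ dot w (cshift^[k] x) = 0

/-- The vector `ê ∈ 𝔽₂ⁿ` with `ê 0 = 0` and `ê i = 1` for `i ≠ 0`. -/
def ehat (n : ℕ) : ZMod n → ZMod 2 := fun i => if i = 0 then 0 else 1

private lemma cshift_iterate {n : ℕ} (x : ZMod n → ZMod 2) (k : ℕ) (i : ZMod n) :
    (cshift^[k] x) i = x (i - (k : ZMod n)) := by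
  induction k generalizing i with
  | zero => simp
  | succ m ih =>
    rw [Function.iterate_succ_apply']
    show (cshift^[m] x) (i - 1) = _
    rw [ih]
    congr 1
    push_cast
    ring

private lemma ehat_dot {n : ℕ} [NeZero n] (y : ZMod n → ZMod 2) :
    dot (ehat n) y + y 0 = ∑ i, y i := by
  unfold dot
  have h1 : ∑ i, ehat n i * y i = ∑ i ∈ Finset.univ.erase 0, y i := by
    rw [← Finset.sum_erase (s := Finset.univ) (f := fun i => ehat n i * y i)
      (by show ehat n 0 * y 0 = 0; simp [ehat])]
    exact Finset.sum_congr rfl fun i hi => by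
      rw [show ehat n i = 1 from if_neg (Finset.mem_erase.mp hi).1, one_mul]
  rw [h1, Finset.sum_erase_add _ _ (Finset.mem_univ 0)]

private lemma myIndicatorSum {n : ℕ} [NeZero n] (S : Finset (ZMod n)) :
    ∑ i, (if i ∈ S then (1 : ZMod 2) else 0) = (S.card : ZMod 2) := by
  rw [Finset.sum_ite_mem, Finset.univ_inter, Finset.sum_const, nsmul_eq_mul, mul_one]

private lemma odd_card_cast {m : ℕ} (h : Odd m) : (m : ZMod 2) = 1 := by
  obtain ⟨j, rfl⟩ := h
  push_cast
  rw [show (2 : ZMod 2) = 0 by decide]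
  ring

private lemma sum_v_filter {n : ℕ} [NeZero n] (v : ZMod n → ZMod 2) (S : Finset (ZMod n))
    (f : ZMod n → ZMod n) :
    ∑ j ∈ S, v (f j) = ((S.filter (fun j => v (f j) = 1)).card : ZMod 2) := by
  rw [← Finset.sum_boole]
  exact Finset.sum_congr rfl fun j _ => by
    rcases zmod2_cases (v (f j)) with h | h <;> simp [h]

private lemma shift_sum_eq {n : ℕ} [NeZero n] (x : ZMod n → ZMod 2) (c : ZMod n) :
    ∑ i, x (i - c) = ∑ i, x i := by
  exact Fintype.sum_equiv (Equiv.subRight c) _ _ (fun i => rfl)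

private lemma dot_shift_out {n : ℕ} [NeZero n] (v : ZMod n → ZMod 2) (S : Finset (ZMod n))
    (k : ZMod n) :
    dot v (fun i => if i - k ∈ S then 1 else 0) = ∑ j ∈ S, v (j + k) := by
  unfold dot
  have h : ∀ i : ZMod n, v i * (if i - k ∈ S then (1 : ZMod 2) else 0)
      = (if i - k ∈ S then v i else 0) := by
    intro i; split <;> simp
  rw [Finset.sum_congr rfl fun i _ => h i]
  rw [Fintype.sum_equiv (Equiv.subRight k)
    (fun i => if i - k ∈ S then v i else 0)
    (fun j => if j ∈ S then v (j + k) else 0)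
    (fun j => by simp)]
  rw [Finset.sum_ite_mem, Finset.univ_inter]

private lemma dot_shift_in {n : ℕ} [NeZero n] (v : ZMod n → ZMod 2) (S : Finset (ZMod n))
    (k : ZMod n) :
    dot v (fun i => if -(i - k) ∈ S then 1 else 0) = ∑ j ∈ S, v (k - j) := by
  unfold dot
  have h : ∀ i : ZMod n, v i * (if -(i - k) ∈ S then (1 : ZMod 2) else 0)
      = (if k - i ∈ S then v i else 0) := by
    intro i; rw [neg_sub]; split <;> simp
  rw [Finset.sum_congr rfl fun i _ => h i]
  rw [Fintype.sum_equiv (Equiv.subLeft k)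
    (fun i => if k - i ∈ S then v i else 0)
    (fun j => if j ∈ S then v (k - j) else 0)
    (fun j => by simp)]
  rw [Finset.sum_ite_mem, Finset.univ_inter]


private lemma myIndicatorNegSum {n : ℕ} [NeZero n] (S : Finset (ZMod n)) :
    ∑ i, (if -i ∈ S then (1 : ZMod 2) else 0) = (S.card : ZMod 2) := by
  rw [Fintype.sum_equiv (Equiv.neg (ZMod n))
    (fun i => if -i ∈ S then (1 : ZMod 2) else 0)
    (fun j => if j ∈ S then (1 : ZMod 2) else 0) (fun i => rfl)]
  exact myIndicatorSum S



private lemma orbit_all {p : ℕ} [NeZero p] (hp : p.Prime) {δ : ZMod p} (hδ : δ ≠ 0)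
    {X : ZMod p → Prop} (hcl : ∀ z, X z → X (z + δ)) {z₀ : ZMod p} (h₀ : X z₀)
    (y : ZMod p) : X y := by
  haveI : Fact p.Prime := ⟨hp⟩
  have hk : ∀ k : ℕ, X (z₀ + (k : ZMod p) * δ) := by
    intro k
    induction k with
    | zero => simpa using h₀
    | succ m ih =>
      have h2 := hcl _ ih
      have e : z₀ + (m : ZMod p) * δ + δ = z₀ + ((m + 1 : ℕ) : ZMod p) * δ := by
        push_cast; ring
      rwa [e] at h2
  have h := hk ((y - z₀) * δ⁻¹).val
  rwa [ZMod.natCast_val, ZMod.cast_id, mul_assoc, inv_mul_cancel₀ hδ, mul_one,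
    add_sub_cancel] at h

private lemma filter_triple_card {p : ℕ} (P : ZMod p → Prop) [DecidablePred P]
    {a b c : ZMod p} (hab : a ≠ b) (hac : a ≠ c) (hbc : b ≠ c) :
    (({a, b, c} : Finset (ZMod p)).filter P).card =
      (if P a then 1 else 0) + ((if P b then 1 else 0) + (if P c then 1 else 0)) := by
  rw [Finset.card_filter]
  rw [show ({a, b, c} : Finset (ZMod p)) = insert a (insert b {c}) from rfl]
  rw [Finset.sum_insert (by simp [hab, hac]), Finset.sum_insert (by simp [hbc]),
    Finset.sum_singleton]

private lemma card_triple {p : ℕ} {a b c : ZMod p} (hab : a ≠ b) (hac : a ≠ c) (hbc : b ≠ c) :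
    ({a, b, c} : Finset (ZMod p)).card = 3 := by
  rw [show ({a, b, c} : Finset (ZMod p)) = insert a (insert b {c}) from rfl]
  rw [Finset.card_insert_of_notMem (by simp [hab, hac]),
    Finset.card_insert_of_notMem (by simp [hbc]), Finset.card_singleton]

private lemma exists_bad (p : ℕ) [NeZero p] (hp : p.Prime) (hodd : Odd p)
    (v : ZMod p → ZMod 2) (h0 : v 0 = 0) (hnonsym : ¬ ∀ i : ZMod p, v i = v (-i))
    (hi : ∃ i : ZMod p, v i = 1 ∧ v (-i) = 1)
    (hj : ∃ j : ZMod p, j ≠ 0 ∧ v j = 0 ∧ v (-j) = 0) :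
    ∃ S : Finset (ZMod p), Odd S.card ∧
      ((∀ i ∈ S, Odd (S.filter (fun j => v (j - i) = 1)).card) ∨
       (∀ i ∈ S, Odd (S.filter (fun j => v (i - j) = 1)).card)) := by
  classical
  haveI : Fact p.Prime := ⟨hp⟩
  by_contra hbad
  -- Step (A): no "N + T" element lies in "B"
  have hA : ∀ x y : ZMod p, v x = 0 → v (-x) = 0 → v y = 1 → v (-y) = 1 →
      v (x + y) = v (-(x + y)) := by
    intro x y hx hx' hy hy'
    by_contra hxy
    have hy0 : y ≠ 0 := fun h => by rw [h, h0] at hy; exact absurd hy (by decide)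
    have hw0 : x + y ≠ 0 := fun h => hxy (by rw [h, neg_zero])
    have hwy : x + y ≠ y := fun h => hxy (by rw [h, hy, hy'])
    have hd1 : (0 : ZMod p) ≠ y := fun h => hy0 h.symm
    have hd2 : (0 : ZMod p) ≠ x + y := fun h => hw0 h.symm
    have hd3 : y ≠ x + y := fun h => hwy h.symm
    have e1 : (x + y) - y = x := by ring
    have e2 : y - (x + y) = -x := by ring
    rcases zmod2_cases (v (x + y)) with hw1 | hw1 <;>
      rcases zmod2_cases (v (-(x + y))) with hw2 | hw2
    · exact hxy (by rw [hw1, hw2])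
    · -- out case
      refine hbad ⟨{0, y, x + y}, ?_, Or.inl ?_⟩
      · rw [card_triple hd1 hd2 hd3]; decide
      · intro i hi'
        simp only [Finset.mem_insert, Finset.mem_singleton] at hi'
        rcases hi' with rfl | rfl | rfl
        · rw [filter_triple_card _ hd1 hd2 hd3,
            if_neg (by rw [sub_zero, h0]; decide),
            if_pos (by rw [sub_zero]; exact hy),
            if_neg (by rw [sub_zero, hw1]; decide)]
          decide
        · rw [filter_triple_card _ hd1 hd2 hd3,
            if_pos (by rw [zero_sub]; exact hy'),
            if_neg (by rw [sub_self, h0]; decide),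
            if_neg (by rw [e1, hx]; decide)]
          decide
        · rw [filter_triple_card _ hd1 hd2 hd3,
            if_pos (by rw [zero_sub]; exact hw2),
            if_neg (by rw [e2, hx']; decide),
            if_neg (by rw [sub_self, h0]; decide)]
          decide
    · -- in case
      refine hbad ⟨{0, y, x + y}, ?_, Or.inr ?_⟩
      · rw [card_triple hd1 hd2 hd3]; decide
      · intro i hi'
        simp only [Finset.mem_insert, Finset.mem_singleton] at hi'
        rcases hi' with rfl | rfl | rfl
        · rw [filter_triple_card _ hd1 hd2 hd3,
            if_neg (by rw [sub_zero, h0]; decide),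
            if_pos (by rw [zero_sub]; exact hy'),
            if_neg (by rw [zero_sub, hw2]; decide)]
          decide
        · rw [filter_triple_card _ hd1 hd2 hd3,
            if_pos (by rw [sub_zero]; exact hy),
            if_neg (by rw [sub_self, h0]; decide),
            if_neg (by rw [e2, hx']; decide)]
          decide
        · rw [filter_triple_card _ hd1 hd2 hd3,
            if_pos (by rw [sub_zero]; exact hw1),
            if_neg (by rw [e1, hx]; decide),
            if_neg (by rw [sub_self, h0]; decide)]
          decide
    · exact hxy (by rw [hw1, hw2])
  -- derived closure rules
  have hNBnotT : ∀ x w : ZMod p, v x = 0 → v (-x) = 0 → v (x + w) = 1 → v (-(x + w)) = 1 →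
      v w = v (-w) := by
    intro x w hx hx' h1 h2
    have h := hA (-x) (x + w) hx' (by rw [neg_neg]; exact hx) h1 h2
    rwa [show -x + (x + w) = w by ring] at h
  have hTBnotN : ∀ y w : ZMod p, v y = 1 → v (-y) = 1 → v (y + w) = 0 → v (-(y + w)) = 0 →
      v w = v (-w) := by
    intro y w hy hy' h1 h2
    have h := hA (y + w) (-y) h1 h2 hy' (by rw [neg_neg]; exact hy)
    rwa [show y + w + -y = w by ring] at h
  -- finsets
  set TT : Finset (ZMod p) := Finset.univ.filter (fun y => v y = 1 ∧ v (-y) = 1) with hTT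
  set BB : Finset (ZMod p) := Finset.univ.filter (fun w => ¬ v w = v (-w)) with hBB
  obtain ⟨t₀, ht₀1, ht₀2⟩ := hi
  push_neg at hnonsym
  obtain ⟨w₀, hw₀⟩ := hnonsym
  have hTne : TT.Nonempty := ⟨t₀, Finset.mem_filter.mpr ⟨Finset.mem_univ _, ht₀1, ht₀2⟩⟩
  have hBne : BB.Nonempty := ⟨w₀, Finset.mem_filter.mpr ⟨Finset.mem_univ _, hw₀⟩⟩
  have negT : ∀ {a : ZMod p}, a ∈ TT → -a ∈ TT := by
    intro a ha
    have h := (Finset.mem_filter.mp ha).2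
    exact Finset.mem_filter.mpr ⟨Finset.mem_univ _, h.2, by rw [neg_neg]; exact h.1⟩
  have negB : ∀ {a : ZMod p}, a ∈ BB → -a ∈ BB := by
    intro a ha
    have h := (Finset.mem_filter.mp ha).2
    exact Finset.mem_filter.mpr ⟨Finset.mem_univ _, by rw [neg_neg]; exact fun hh => h hh.symm⟩
  have htwo : (2 : ZMod p) ≠ 0 := by
    intro h2
    have hd : p ∣ 2 := by
      rwa [show (2 : ZMod p) = ((2 : ℕ) : ZMod p) by push_cast; ring,
        ZMod.natCast_eq_zero_iff] at h2
    rcases (Nat.prime_dvd_prime_iff_eq hp Nat.prime_two).mp hd with rfl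
    exact (by decide : ¬ Odd 2) hodd
  have neg_ne_self : ∀ z : ZMod p, z ≠ 0 → -z ≠ z := by
    intro z hz h
    have h2 : (2 : ZMod p) * z = 0 := by
      rw [two_mul]
      nth_rewrite 1 [← h]
      exact neg_add_cancel z
    rcases mul_eq_zero.mp h2 with hc | hc
    · exact htwo hc
    · exact hz hc
  -- L4: every element of TT is in TT + BB
  have hTsub : ∀ t ∈ TT, t ∈ TT + BB := by
    intro t ht
    have ht0 : t ≠ 0 := fun h => by
      have := (Finset.mem_filter.mp ht).2.1
      rw [h, h0] at this; exact absurd this (by decide)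
    by_contra hnot
    have hnot' : -t ∉ TT + BB := by
      intro hm
      obtain ⟨a, ha, b, hb, hab⟩ := Finset.mem_add.mp hm
      exact hnot (Finset.mem_add.mpr ⟨-a, negT ha, -b, negB hb, by linear_combination -hab⟩)
    have hsub2 : TT + BB ⊆ ((TT ∪ BB).erase t).erase (-t) := by
      intro z hz
      obtain ⟨a, ha, b, hb, hab⟩ := Finset.mem_add.mp hz
      have haT := (Finset.mem_filter.mp ha).2
      have hbB := (Finset.mem_filter.mp hb).2
      rw [Finset.mem_erase, Finset.mem_erase]
      refine ⟨fun h => hnot' (h ▸ hz), fun h => hnot (h ▸ hz), ?_⟩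
      have hznotN : ¬ (v z = 0 ∧ v (-z) = 0) := by
        intro hzN
        exact hbB (hTBnotN a b haT.1 haT.2 (by rw [hab]; exact hzN.1)
          (by rw [hab]; exact hzN.2))
      by_cases hzeq : v z = v (-z)
      · rcases zmod2_cases (v z) with hz1 | hz1
        · exact absurd ⟨hz1, by rw [← hzeq]; exact hz1⟩ hznotN
        · exact Finset.mem_union_left _
            (Finset.mem_filter.mpr ⟨Finset.mem_univ _, hz1, by rw [← hzeq]; exact hz1⟩)
      · exact Finset.mem_union_right _ (Finset.mem_filter.mpr ⟨Finset.mem_univ _, hzeq⟩)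
    have hdisj : Disjoint TT BB := by
      rw [Finset.disjoint_left]
      intro a ha hb
      have h1 := (Finset.mem_filter.mp ha).2
      have h2 := (Finset.mem_filter.mp hb).2
      exact h2 (by rw [h1.1, h1.2])
    have hcup : (TT ∪ BB).card = TT.card + BB.card := Finset.card_union_of_disjoint hdisj
    have hnt : -t ∈ (TT ∪ BB).erase t :=
      Finset.mem_erase.mpr ⟨neg_ne_self t ht0, Finset.mem_union_left _ (negT ht)⟩
    have hchain := Finset.card_le_card hsub2
    rw [Finset.card_erase_of_mem hnt,
      Finset.card_erase_of_mem (show t ∈ TT ∪ BB from Finset.mem_union_left _ ht),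
      hcup] at hchain
    have hCD := ZMod.cauchy_davenport hp hTne hBne
    have hsub0 : TT ∪ BB ⊆ Finset.univ.erase 0 := by
      intro z hz
      rw [Finset.mem_erase]
      refine ⟨?_, Finset.mem_univ _⟩
      rintro rfl
      rcases Finset.mem_union.mp hz with hzT | hzB
      · have hh := (Finset.mem_filter.mp hzT).2.1
        rw [h0] at hh; exact absurd hh (by decide)
      · exact (Finset.mem_filter.mp hzB).2 (by rw [neg_zero])
    have hple : TT.card + BB.card ≤ p - 1 := by
      have hc := Finset.card_le_card hsub0
      rwa [Finset.card_erase_of_mem (Finset.mem_univ 0), Finset.card_univ, ZMod.card,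
        hcup] at hc
    have h1T : 0 < TT.card := Finset.card_pos.mpr hTne
    have h1B : 0 < BB.card := Finset.card_pos.mpr hBne
    omega
  -- L5: for every t in TT, N + t ⊆ TT
  have hstep : ∀ y z : ZMod p, v y = 1 → v (-y) = 1 → v z = 0 → v (-z) = 0 →
      v (z + y) = 1 ∧ v (-(z + y)) = 1 := by
    intro y z hy hy' hz hz'
    have hyT : y ∈ TT := Finset.mem_filter.mpr ⟨Finset.mem_univ _, hy, hy'⟩
    obtain ⟨a, ha, b, hb, hab⟩ := Finset.mem_add.mp (hTsub y hyT)
    have haT := (Finset.mem_filter.mp ha).2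
    have hbB := (Finset.mem_filter.mp hb).2
    have hb0 : b ≠ 0 := fun h => hbB (by rw [h, neg_zero])
    have hcl : ∀ u : ZMod p,
        ((v u = 0 ∧ v (-u) = 0) ∧ (v (u + y) = 0 ∧ v (-(u + y)) = 0)) →
        ((v (u + b) = 0 ∧ v (-(u + b)) = 0) ∧
          (v ((u + b) + y) = 0 ∧ v (-((u + b) + y)) = 0)) := by
      rintro u ⟨⟨hu1, hu2⟩, hw1, hw2⟩
      have e1 : u + b = (u + y) + -a := by rw [← hab]; ring
      have i1 : v (u + b) = v (-(u + b)) := by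
        rw [e1]
        exact hA (u + y) (-a) hw1 hw2 haT.2 (by rw [neg_neg]; exact haT.1)
      have i2 : ¬ (v (u + b) = 1 ∧ v (-(u + b)) = 1) := fun hcon =>
        hbB (hNBnotT u b hu1 hu2 hcon.1 hcon.2)
      have i3 : v (u + b) = 0 ∧ v (-(u + b)) = 0 := by
        rcases zmod2_cases (v (u + b)) with h | h
        · exact ⟨h, by rw [← i1]; exact h⟩
        · exact (i2 ⟨h, by rw [← i1]; exact h⟩).elim
      have e2 : (u + b) + y = (u + y) + b := by ring
      have i4 : v ((u + b) + y) = v (-((u + b) + y)) :=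
        hA (u + b) y i3.1 i3.2 hy hy'
      have i5 : ¬ (v ((u + b) + y) = 1 ∧ v (-((u + b) + y)) = 1) := by
        rw [e2]
        exact fun hcon => hbB (hNBnotT (u + y) b hw1 hw2 hcon.1 hcon.2)
      have i6 : v ((u + b) + y) = 0 ∧ v (-((u + b) + y)) = 0 := by
        rcases zmod2_cases (v ((u + b) + y)) with h | h
        · exact ⟨h, by rw [← i4]; exact h⟩
        · exact (i5 ⟨h, by rw [← i4]; exact h⟩).elim
      exact ⟨i3, i6⟩
    have hAz : v (z + y) = v (-(z + y)) := hA z y hz hz' hy hy'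
    by_contra hcon
    have hzy0 : v (z + y) = 0 := by
      rcases zmod2_cases (v (z + y)) with h | h
      · exact h
      · exact absurd ⟨h, by rw [← hAz]; exact h⟩ hcon
    have hXy := orbit_all hp hb0 hcl ⟨⟨hz, hz'⟩, hzy0, by rw [← hAz]; exact hzy0⟩ y
    have := hXy.1.1
    rw [hy] at this
    exact absurd this (by decide)
  -- L6: TT is closed under adding the nonzero "N" element c
  obtain ⟨c, hc0, hc1, hc2⟩ := hj
  have hTcl : ∀ u : ZMod p, (v u = 1 ∧ v (-u) = 1) → (v (u + c) = 1 ∧ v (-(u + c)) = 1) := by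
    intro u hu
    have h := hstep u c hu.1 hu.2 hc1 hc2
    rwa [show c + u = u + c from add_comm c u] at h
  have h0T := orbit_all hp hc0 hTcl (⟨ht₀1, ht₀2⟩ :
    v t₀ = 1 ∧ v (-t₀) = 1) 0
  have := h0T.1
  rw [h0] at this
  exact absurd this (by decide)

/-- Let `p` be an odd prime and `v ∈ 𝔽₂ᵖ` a non-symmetric vector with `v 0 = 0`. Suppose
there exist simultaneously `i` with `v i = v (-i) = 1` and `j ≠ 0` with `v j = v (-j) = 0`.
Then there is a subset `S ⊆ ℤ/pℤ` of odd cardinality such that either every `i ∈ S` has an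
odd number of `j ∈ S` with `v (j - i) = 1` (odd outdegree in the induced subgraph of the
Cayley digraph `G_v`), or every `i ∈ S` has an odd number of `j ∈ S` with `v (i - j) = 1`
(odd indegree). In particular, `v` and `ê` do not work together. -/
theorem bad_subgraph_of_twoway_edge (p : ℕ) [NeZero p] (hp : p.Prime) (hodd : Odd p)
    (v : ZMod p → ZMod 2) (h0 : v 0 = 0) (hnonsym : ¬ ∀ i : ZMod p, v i = v (-i))
    (hi : ∃ i : ZMod p, v i = 1 ∧ v (-i) = 1)
    (hj : ∃ j : ZMod p, j ≠ 0 ∧ v j = 0 ∧ v (-j) = 0) :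
    (∃ S : Finset (ZMod p), Odd S.card ∧
        ((∀ i ∈ S, Odd (S.filter (fun j => v (j - i) = 1)).card) ∨
         (∀ i ∈ S, Odd (S.filter (fun j => v (i - j) = 1)).card))) ∧
      ¬ WorkTogether2 v (ehat p) := by
  classical
  obtain ⟨S, hScard, hSdeg⟩ := exists_bad p hp hodd v h0 hnonsym hi hj
  refine ⟨⟨S, hScard, hSdeg⟩, ?_⟩
  intro hwt
  rcases hSdeg with hout | hin
  · obtain ⟨k, hv, he⟩ := hwt (fun i => if i ∈ S then 1 else 0)
    have hyeq : cshift^[k] (fun i => if i ∈ S then (1 : ZMod 2) else 0)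
        = fun i => if i - (k : ZMod p) ∈ S then 1 else 0 := by
      funext i; rw [cshift_iterate]
    rw [hyeq] at hv he
    have hsum : ∑ i : ZMod p, (if i - (k : ZMod p) ∈ S then (1 : ZMod 2) else 0) = 1 := by
      rw [shift_sum_eq (fun i => if i ∈ S then (1 : ZMod 2) else 0) (k : ZMod p),
        myIndicatorSum, odd_card_cast hScard]
    have hed := ehat_dot (fun i => if i - (k : ZMod p) ∈ S then (1 : ZMod 2) else 0)
    rw [he, hsum, zero_add] at hed
    rw [zero_sub] at hed
    have hmem : -(k : ZMod p) ∈ S := by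
      by_contra hm
      rw [if_neg hm] at hed
      exact absurd hed (by decide)
    rw [dot_shift_out v S (k : ZMod p)] at hv
    have hone : ∑ j ∈ S, v (j + (k : ZMod p)) = 1 := by
      rw [Finset.sum_congr rfl (fun j _ => by
        rw [show j + (k : ZMod p) = j - (-(k : ZMod p)) by ring]),
        sum_v_filter v S (fun j => j - (-(k : ZMod p))), odd_card_cast (hout _ hmem)]
    rw [hv] at hone
    exact absurd hone (by decide)
  · obtain ⟨k, hv, he⟩ := hwt (fun i => if -i ∈ S then 1 else 0)
    have hyeq : cshift^[k] (fun i => if -i ∈ S then (1 : ZMod 2) else 0)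
        = fun i => if -(i - (k : ZMod p)) ∈ S then 1 else 0 := by
      funext i; rw [cshift_iterate]
    rw [hyeq] at hv he
    have hsum : ∑ i : ZMod p, (if -(i - (k : ZMod p)) ∈ S then (1 : ZMod 2) else 0) = 1 := by
      rw [shift_sum_eq (fun i => if -i ∈ S then (1 : ZMod 2) else 0) (k : ZMod p),
        myIndicatorNegSum, odd_card_cast hScard]
    have hed := ehat_dot (fun i => if -(i - (k : ZMod p)) ∈ S then (1 : ZMod 2) else 0)
    rw [he, hsum, zero_add] at hed
    rw [show -((0 : ZMod p) - (k : ZMod p)) = (k : ZMod p) by ring] at hed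
    have hmem : (k : ZMod p) ∈ S := by
      by_contra hm
      rw [if_neg hm] at hed
      exact absurd hed (by decide)
    rw [dot_shift_in v S (k : ZMod p)] at hv
    have hone : ∑ j ∈ S, v ((k : ZMod p) - j) = 1 := by
      rw [sum_v_filter v S (fun j => (k : ZMod p) - j), odd_card_cast (hin _ hmem)]
    rw [hv] at hone
    exact absurd hone (by decide)
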